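/- arXiv:1508.00219 — 2 statements merged into one kernel-verified Lean document; each statement's English description precedes it below -/
import Mathlib

section
/- For y1, y2 > 0 set K2(y1,y2) = (1−e^{−λ y1})^{α1}·(1−e^{−λ y2})^{α2+α3} and f2(y1, y2) = (θ / C(θ)) · f_GE(y1; α1, λ) · f_GE(y2; α2+α3, λ) · [ θ K2 · C''(θ K2) + C'(θ K2) ]. Then the double integral of f2 over the region { (y1, y2) : 0 < y2 < y1 } equals α1 / (α1+α2+α3). (This is the probability P(Y2 < Y1) under the BGEPS distribution; together with the masses α2/(α1+α2+α3) of f1 on {y1 < y2} and α3/(α1+α2+α3) on the diagonal, the total mass is 1.) -/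
open Real Filter MeasureTheory

open Set Topology

private lemma summable_geom_aux {q : ℝ} (hq0 : 0 ≤ q) (hq1 : q < 1) (k : ℕ) :
    Summable (fun n : ℕ => (n : ℝ) ^ k * q ^ n) :=
  summable_pow_mul_geometric_of_norm_lt_one k (by rwa [Real.norm_eq_abs, abs_of_nonneg hq0])

private lemma coeff_bound {b : ℕ → ℝ} {s : ℝ} (hs : 0 < s)
    (hb : Summable fun n => |b n| * s ^ n) (n : ℕ) :
    |b n| ≤ (∑' m, |b m| * s ^ m) / s ^ n := by
  rw [le_div_iff₀ (by positivity)]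
  exact Summable.le_tsum hb n fun m _ => by positivity

private lemma shift_summable {b : ℕ → ℝ} {s s' : ℝ} (hs' : 0 < s') (hss : s' < s)
    (hb : Summable fun n => |b n| * s ^ n) :
    Summable fun n => |b (n + 1) * ((n : ℝ) + 1)| * s' ^ n := by
  have hs : 0 < s := hs'.trans hss
  set M := ∑' m, |b m| * s ^ m with hM
  have hq0 : (0:ℝ) ≤ s'/s := by positivity
  have hq1 : s'/s < 1 := (div_lt_one hs).mpr hss
  have hmaj : Summable (fun n : ℕ => (M/s') * (((n:ℝ) + 1) * (s'/s) ^ (n+1))) := by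
    have h := (((summable_geom_aux hq0 hq1 1).add (summable_geom_aux hq0 hq1 0)).mul_left
      ((M/s') * (s'/s)))
    apply h.congr
    intro n
    ring
  apply Summable.of_nonneg_of_le (fun n => by positivity) (fun n => ?_) hmaj
  have h1 : |b (n+1)| ≤ M / s ^ (n+1) := coeff_bound hs hb (n+1)
  have h2 : |b (n + 1) * ((n : ℝ) + 1)| = |b (n+1)| * ((n:ℝ)+1) := by
    rw [abs_mul, abs_of_nonneg (by positivity : (0:ℝ) ≤ (n:ℝ)+1)]
  rw [h2]
  calc |b (n+1)| * ((n:ℝ)+1) * s' ^ n ≤ (M / s^(n+1)) * ((n:ℝ)+1) * s'^n := by gcongr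
    _ = (M/s') * (((n:ℝ)+1) * (s'/s)^(n+1)) := by
        rw [div_pow]; field_simp; ring

private lemma series_hasDerivAt {b : ℕ → ℝ} {s s' : ℝ} (hs' : 0 < s') (hss : s' < s)
    (hb : Summable fun n => |b n| * s ^ n) {x : ℝ} (hx : x ∈ Set.Ioo (-s') s') :
    HasDerivAt (fun y : ℝ => ∑' n, b n * y ^ n)
      (∑' n, b (n + 1) * ((n : ℝ) + 1) * x ^ n) x := by
  have hs : 0 < s := hs'.trans hss
  set M := ∑' m, |b m| * s ^ m with hM
  have hq0 : (0:ℝ) ≤ s'/s := by positivity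
  have hq1 : s'/s < 1 := (div_lt_one hs).mpr hss
  set u : ℕ → ℝ := fun n => (M/s') * ((n:ℝ) * (s'/s) ^ n) with hu
  have hus : Summable u := ((summable_geom_aux hq0 hq1 1).mul_left (M/s')).congr
    (fun n => by simp only [hu, pow_one])
  have hbound : ∀ (n : ℕ) (y : ℝ), y ∈ Set.Ioo (-s') s' →
      ‖b n * ((n:ℝ) * y ^ (n-1))‖ ≤ u n := by
    intro n y hy
    have hy' : |y| ≤ s' := by
      rw [abs_le]; exact ⟨hy.1.le, hy.2.le⟩
    cases n with
    | zero => simp [hu]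
    | succ m =>
      have h1 : |b (m+1)| ≤ M / s ^ (m+1) := coeff_bound hs hb (m+1)
      have hexpand : ‖b (m+1) * (((m+1:ℕ):ℝ) * y ^ (m+1-1))‖
          = |b (m+1)| * (((m:ℝ)+1) * |y| ^ m) := by
        rw [Real.norm_eq_abs, abs_mul, abs_mul, abs_pow]
        push_cast
        rw [abs_of_nonneg (by positivity : (0:ℝ) ≤ (m:ℝ)+1)]
      rw [hexpand]
      calc |b (m+1)| * (((m:ℝ)+1) * |y| ^ m)
          ≤ (M / s^(m+1)) * (((m:ℝ)+1) * s' ^ m) := by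
            have hym : |y| ^ m ≤ s' ^ m := pow_le_pow_left₀ (abs_nonneg y) hy' m
            exact mul_le_mul h1 (mul_le_mul_of_nonneg_left hym (by positivity))
              (by positivity) (le_trans (abs_nonneg _) h1)
        _ = u (m+1) := by
            simp only [hu, div_pow]
            push_cast
            field_simp
            ring
  have hder : ∀ (n : ℕ) (y : ℝ), y ∈ Set.Ioo (-s') s' →
      HasDerivAt (fun z : ℝ => b n * z ^ n) (b n * ((n:ℝ) * y ^ (n-1))) y :=
    fun n y _ => (hasDerivAt_pow n y).const_mul (b n)
  have h0 : (0:ℝ) ∈ Set.Ioo (-s') s' := ⟨by linarith, hs'⟩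
  have hsum0 : Summable fun n : ℕ => b n * (0:ℝ) ^ n := by
    apply summable_of_ne_finset_zero (s := {0})
    intro n hn
    simp only [Finset.mem_singleton] at hn
    simp [zero_pow hn]
  have H := hasDerivAt_tsum_of_isPreconnected hus isOpen_Ioo isPreconnected_Ioo
    hder hbound h0 hsum0 hx
  refine HasDerivAt.congr_deriv H (Eq.symm ?_)
  have hsumd : Summable fun n : ℕ => b n * ((n:ℝ) * x ^ (n-1)) :=
    Summable.of_norm_bounded hus (fun n => hbound n x hx)
  rw [Summable.tsum_eq_zero_add hsumd]
  norm_num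
  apply tsum_congr
  intro n
  push_cast
  ring

/-- The generalized exponential pdf `f_GE(x; α, λ) = α λ e^{-λx} (1-e^{-λx})^{α-1}`. -/
noncomputable def fGE (x α lam : ℝ) : ℝ :=
  α * lam * Real.exp (-lam * x) * (1 - Real.exp (-lam * x)) ^ (α - 1)

/-- `K2(y1,y2) = (1-e^{-λ y1})^{α1} (1-e^{-λ y2})^{α2+α3}`. -/
noncomputable def K2 (α1 α2 α3 lam y1 y2 : ℝ) : ℝ :=
  (1 - Real.exp (-lam * y1)) ^ α1 * (1 - Real.exp (-lam * y2)) ^ (α2 + α3)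

private lemma continuous_rpow_pos {c : ℝ} (hc : 0 < c) :
    Continuous fun x : ℝ => x ^ c :=
  continuous_iff_continuousAt.mpr fun x => Real.continuousAt_rpow_const x c (Or.inr hc.le)

private lemma continuous_base (lam : ℝ) : Continuous fun y : ℝ => 1 - Real.exp (-lam * y) :=
  continuous_const.sub (Real.continuous_exp.comp (continuous_const.mul continuous_id))

private lemma base_pos {lam y : ℝ} (hlam : 0 < lam) (hy : 0 < y) :
    0 < 1 - Real.exp (-lam * y) := by
  have h : Real.exp (-lam * y) < 1 := Real.exp_lt_one_iff.mpr (by nlinarith)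
  linarith

private lemma base_nonneg {lam y : ℝ} (hlam : 0 < lam) (hy : 0 ≤ y) :
    0 ≤ 1 - Real.exp (-lam * y) := by
  have h : Real.exp (-lam * y) ≤ 1 := by
    rw [← Real.exp_zero]
    exact Real.exp_le_exp.mpr (by nlinarith)
  linarith

private lemma base_lt_one {lam y : ℝ} : 1 - Real.exp (-lam * y) < 1 := by
  have := Real.exp_pos (-lam * y); linarith

private lemma hasDerivAt_base (lam y : ℝ) :
    HasDerivAt (fun z : ℝ => 1 - Real.exp (-lam * z)) (lam * Real.exp (-lam * y)) y := by
  have h1 : HasDerivAt (fun z : ℝ => -lam * z) (-lam) y := by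
    simpa using (hasDerivAt_id y).const_mul (-lam)
  have h3 := (h1.exp).const_sub 1
  exact h3.congr_deriv (by ring)

private lemma hasDerivAt_F {lam c y : ℝ} (hlam : 0 < lam) (hy : 0 < y) :
    HasDerivAt (fun z : ℝ => (1 - Real.exp (-lam * z)) ^ c) (fGE y c lam) y := by
  have hb := base_pos hlam hy
  have h := (hasDerivAt_base lam y).rpow_const (p := c) (Or.inl hb.ne')
  convert h using 1
  rw [fGE]
  ring

private lemma continuousAt_fGE {lam c y : ℝ} (hlam : 0 < lam) (hy : 0 < y) :
    ContinuousAt (fun z => fGE z c lam) y := by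
  have hb := base_pos hlam hy
  have h1 : ContinuousAt (fun x : ℝ => x ^ (c - 1)) (1 - Real.exp (-lam * y)) :=
    Real.continuousAt_rpow_const _ _ (Or.inl hb.ne')
  have h2 : ContinuousAt (fun z : ℝ => (1 - Real.exp (-lam * z)) ^ (c - 1)) y :=
    ContinuousAt.comp (g := fun x : ℝ => x ^ (c - 1))
      (f := fun z : ℝ => 1 - Real.exp (-lam * z)) h1 (continuous_base lam).continuousAt
  exact (((continuousAt_const.mul continuousAt_const).mul
    ((Real.continuous_exp.comp (continuous_const.mul continuous_id)).continuousAt)).mul h2)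

private lemma fGE_pos {lam c y : ℝ} (hlam : 0 < lam) (hc : 0 < c) (hy : 0 < y) :
    0 < fGE y c lam := by
  have hb := base_pos hlam hy
  rw [fGE]
  have := Real.exp_pos (-lam * y)
  have := Real.rpow_pos_of_pos hb (c - 1)
  positivity

set_option maxHeartbeats 4000000 in
/-- `P(Y2 < Y1) = α1/(α1+α2+α3)` under the BGEPS distribution: the double integral of
`f2(y1,y2) = (θ/C(θ)) f_GE(y1; α1, λ) f_GE(y2; α2+α3, λ) (θ K2 C''(θ K2) + C'(θ K2))`
over `{(y1,y2) : 0 < y2 < y1}` equals `α1/(α1+α2+α3)`. -/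
theorem stmt_11 (a : ℕ → ℝ) (ha : ∀ n, 0 ≤ a n) (hne : ∃ n : ℕ, 0 < a (n + 1))
    (θ : ℝ) (hθ : 0 < θ)
    (hrad : ∃ r : ℝ, θ < r ∧ Summable fun n : ℕ => |a (n + 1)| * r ^ (n + 1))
    (C : ℝ → ℝ) (hC : ∀ x : ℝ, C x = ∑' n : ℕ, a (n + 1) * x ^ (n + 1))
    (hCθ : 0 < C θ)
    (α1 α2 α3 lam : ℝ) (hα1 : 0 < α1) (hα2 : 0 < α2) (hα3 : 0 < α3) (hlam : 0 < lam) :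
    ∫ p in {q : ℝ × ℝ | 0 < q.2 ∧ q.2 < q.1},
        θ / C θ * fGE p.1 α1 lam * fGE p.2 (α2 + α3) lam *
          (θ * K2 α1 α2 α3 lam p.1 p.2 * deriv (deriv C) (θ * K2 α1 α2 α3 lam p.1 p.2) +
            deriv C (θ * K2 α1 α2 α3 lam p.1 p.2)) =
      α1 / (α1 + α2 + α3) := by
  classical
  obtain ⟨r, hθr, hsum⟩ := hrad
  have hr0 : 0 < r := hθ.trans hθr
  obtain ⟨r1, r2, r3, hθ3, h32, h21, h1r⟩ :
      ∃ r1 r2 r3 : ℝ, θ < r3 ∧ r3 < r2 ∧ r2 < r1 ∧ r1 < r :=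
    ⟨θ + (r - θ) * (3/4), θ + (r - θ) * (2/4), θ + (r - θ) * (1/4),
      by linarith, by linarith, by linarith, by linarith⟩
  have hr3 : 0 < r3 := hθ.trans hθ3
  have hr2 : 0 < r2 := hr3.trans h32
  have hr1 : 0 < r1 := hr2.trans h21
  have hA : 0 < α2 + α3 := by linarith
  have hT : 0 < α1 + (α2 + α3) := by linarith
  -- power series coefficients
  set b0 : ℕ → ℝ := fun n => if n = 0 then 0 else a n with hb0def
  set b1 : ℕ → ℝ := fun n => b0 (n + 1) * ((n : ℝ) + 1) with hb1def
  set b2 : ℕ → ℝ := fun n => b1 (n + 1) * ((n : ℝ) + 1) with hb2def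
  set E1 : ℝ → ℝ := fun x => ∑' n, b1 n * x ^ n with hE1def
  set E2 : ℝ → ℝ := fun x => ∑' n, b2 n * x ^ n with hE2def
  have hb0nn : ∀ n, 0 ≤ b0 n := by
    intro n; simp only [hb0def]; split
    · exact le_refl 0
    · exact ha n
  have hb1nn : ∀ n, 0 ≤ b1 n := fun n => mul_nonneg (hb0nn _) (by positivity)
  have hb2nn : ∀ n, 0 ≤ b2 n := fun n => mul_nonneg (hb1nn _) (by positivity)
  have hb0sum : Summable fun n => |b0 n| * r ^ n := by
    apply (summable_nat_add_iff 1).mp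
    apply hsum.congr
    intro n
    simp [hb0def]
  have hCb0 : ∀ x : ℝ, C x = ∑' n, b0 n * x ^ n := by
    intro x
    rw [hC]
    by_cases hsx : Summable (fun n : ℕ => b0 n * x ^ n)
    · rw [Summable.tsum_eq_zero_add hsx]
      simp [hb0def]
    · have hsx2 : ¬ Summable (fun n : ℕ => a (n + 1) * x ^ (n + 1)) := fun hcon =>
        hsx ((summable_nat_add_iff 1).mp (hcon.congr fun n => by simp [hb0def]))
      rw [tsum_eq_zero_of_not_summable hsx, tsum_eq_zero_of_not_summable hsx2]
  have funCb0 : C = fun x => ∑' n, b0 n * x ^ n := funext hCb0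
  have hb1sum : Summable fun n => |b1 n| * r1 ^ n :=
    (shift_summable hr1 h1r hb0sum).congr fun n => by simp only [hb1def]
  have hb2sum : Summable fun n => |b2 n| * r2 ^ n :=
    (shift_summable hr2 h21 hb1sum).congr fun n => by simp only [hb2def]
  have hD1 : ∀ x ∈ Set.Ioo (-r1) r1, HasDerivAt C (E1 x) x := by
    intro x hx
    have h := series_hasDerivAt hr1 h1r hb0sum hx
    rw [← funCb0] at h
    simpa only [hE1def, hb1def] using h
  have hD2 : ∀ x ∈ Set.Ioo (-r2) r2, HasDerivAt E1 (E2 x) x := by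
    intro x hx
    have h := series_hasDerivAt hr2 h21 hb1sum hx
    simpa only [hE1def, hE2def, hb2def] using h
  have hE2cont : ∀ x ∈ Set.Ioo (-r3) r3, ContinuousAt E2 x := by
    intro x hx
    have h := (series_hasDerivAt hr3 h32 hb2sum hx).continuousAt
    simpa only [← hE2def] using h
  have hderivC : ∀ x ∈ Set.Ioo (-r2) r2, deriv C x = E1 x := fun x hx =>
    (hD1 x ⟨by linarith [hx.1], by linarith [hx.2]⟩).deriv
  have hderiv2C : ∀ x ∈ Set.Ioo (-r3) r3, deriv (deriv C) x = E2 x := by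
    intro x hx
    have hmem2 : x ∈ Set.Ioo (-r2) r2 := ⟨by linarith [hx.1], by linarith [hx.2]⟩
    have hev : deriv C =ᶠ[𝓝 x] E1 :=
      Filter.eventuallyEq_of_mem (isOpen_Ioo.mem_nhds hmem2) hderivC
    rw [hev.deriv_eq]
    exact (hD2 x hmem2).deriv
  have hE1nn : ∀ x : ℝ, 0 ≤ x → 0 ≤ E1 x := by
    intro x hx
    simp only [hE1def]
    exact tsum_nonneg fun n => mul_nonneg (hb1nn n) (pow_nonneg hx n)
  have hE2nn : ∀ x : ℝ, 0 ≤ x → 0 ≤ E2 x := by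
    intro x hx
    simp only [hE2def]
    exact tsum_nonneg fun n => mul_nonneg (hb2nn n) (pow_nonneg hx n)
  have hC0 : C 0 = 0 := by
    rw [hC]; simp
  have hCcontθ : ContinuousAt C θ := (hD1 θ ⟨by linarith, by linarith⟩).continuousAt
  have hCcont0 : ContinuousAt C 0 := (hD1 0 ⟨by linarith, by linarith⟩).continuousAt
  -- the set and integrand
  set S : Set (ℝ × ℝ) := {q : ℝ × ℝ | 0 < q.2 ∧ q.2 < q.1} with hSdef
  set f : ℝ × ℝ → ℝ := fun p =>
    θ / C θ * fGE p.1 α1 lam * fGE p.2 (α2 + α3) lam *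
      (θ * K2 α1 α2 α3 lam p.1 p.2 * deriv (deriv C) (θ * K2 α1 α2 α3 lam p.1 p.2) +
        deriv C (θ * K2 α1 α2 α3 lam p.1 p.2)) with hfdef
  -- basic facts about the K values
  have hbase01 : ∀ y : ℝ, 0 < y → 0 < 1 - Real.exp (-lam * y) ∧ 1 - Real.exp (-lam * y) < 1 :=
    fun y hy => ⟨base_pos hlam hy, base_lt_one⟩
  have hKval : ∀ c z : ℝ, 0 < c → 0 ≤ z → 0 ≤ z → z ≤ 1 → True := fun _ _ _ _ _ _ => trivial
  have hK2mem : ∀ x y : ℝ, 0 < x → 0 < y →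
      0 < θ * K2 α1 α2 α3 lam x y ∧ θ * K2 α1 α2 α3 lam x y < θ := by
    intro x y hx hy
    have hbx := base_pos hlam hx
    have hby := base_pos hlam hy
    have h1 : 0 < (1 - Real.exp (-lam * x)) ^ α1 := Real.rpow_pos_of_pos hbx α1
    have h2 : 0 < (1 - Real.exp (-lam * y)) ^ (α2 + α3) := Real.rpow_pos_of_pos hby (α2 + α3)
    have h3 : (1 - Real.exp (-lam * x)) ^ α1 < 1 :=
      Real.rpow_lt_one hbx.le base_lt_one hα1
    have h4 : (1 - Real.exp (-lam * y)) ^ (α2 + α3) < 1 :=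
      Real.rpow_lt_one hby.le base_lt_one hA
    have hK1 : 0 < K2 α1 α2 α3 lam x y := by rw [K2]; positivity
    have hK2lt : K2 α1 α2 α3 lam x y < 1 := by
      rw [K2]
      nlinarith
    exact ⟨by positivity, by nlinarith⟩
  have hmem3 : ∀ z : ℝ, 0 < z → z < θ → z ∈ Set.Ioo (-r3) r3 :=
    fun z h1 h2 => ⟨by linarith, by linarith⟩
  have hmem2of3 : ∀ z : ℝ, z ∈ Set.Ioo (-r3) r3 → z ∈ Set.Ioo (-r2) r2 :=
    fun z hz => ⟨by linarith [hz.1], by linarith [hz.2]⟩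
  -- outer integrand and antiderivative
  set ψ : ℝ → ℝ := fun x => θ / C θ * fGE x α1 lam *
      ((1 - Real.exp (-lam * x)) ^ (α2 + α3) *
        E1 (θ * (1 - Real.exp (-lam * x)) ^ (α1 + (α2 + α3)))) with hψdef
  set Φ : ℝ → ℝ := fun x => θ / C θ * (α1 / ((α1 + (α2 + α3)) * θ)) *
      C (θ * (1 - Real.exp (-lam * x)) ^ (α1 + (α2 + α3))) with hΦdef
  -- inner slice: integrability and value
  have hinner : ∀ x : ℝ, 0 < x →
      IntegrableOn (fun y => f (x, y)) (Set.Ioo 0 x) volume ∧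
      (∫ y in Set.Ioo 0 x, f (x, y)) = ψ x := by
    intro x hx
    have hbx := base_pos hlam hx
    set Bx : ℝ := (1 - Real.exp (-lam * x)) ^ α1 with hBxdef
    have hBx0 : 0 < Bx := Real.rpow_pos_of_pos hbx α1
    have hBx1 : Bx < 1 := Real.rpow_lt_one hbx.le base_lt_one hα1
    set φ : ℝ → ℝ := fun y => (1 - Real.exp (-lam * y)) ^ (α2 + α3) *
        E1 (θ * Bx * (1 - Real.exp (-lam * y)) ^ (α2 + α3)) with hφdef
    set w : ℝ → ℝ := fun y => fGE y (α2 + α3) lam *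
        (θ * Bx * (1 - Real.exp (-lam * y)) ^ (α2 + α3) *
          E2 (θ * Bx * (1 - Real.exp (-lam * y)) ^ (α2 + α3)) +
         E1 (θ * Bx * (1 - Real.exp (-lam * y)) ^ (α2 + α3))) with hwdef
    have hKmemIcc : ∀ y : ℝ, 0 ≤ y →
        0 ≤ θ * Bx * (1 - Real.exp (-lam * y)) ^ (α2 + α3) ∧
        θ * Bx * (1 - Real.exp (-lam * y)) ^ (α2 + α3) ∈ Set.Ioo (-r2) r2 := by
      intro y hy
      have hby0 : 0 ≤ 1 - Real.exp (-lam * y) := base_nonneg hlam hy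
      have h0 : 0 ≤ (1 - Real.exp (-lam * y)) ^ (α2 + α3) := Real.rpow_nonneg hby0 _
      have h1 : (1 - Real.exp (-lam * y)) ^ (α2 + α3) ≤ 1 :=
        Real.rpow_le_one hby0 base_lt_one.le hA.le
      have hnn : 0 ≤ θ * Bx * (1 - Real.exp (-lam * y)) ^ (α2 + α3) := by positivity
      have h2 : θ * Bx * (1 - Real.exp (-lam * y)) ^ (α2 + α3) ≤ θ * Bx := by
        have := mul_le_mul_of_nonneg_left h1 (mul_nonneg hθ.le hBx0.le)
        simpa using this
      have h3 : θ * Bx < θ := mul_lt_of_lt_one_right hθ hBx1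
      exact ⟨hnn, ⟨by linarith, by linarith⟩⟩
    have hφderiv : ∀ y ∈ Set.Ioo (0:ℝ) x, HasDerivAt φ (w y) y := by
      intro y hy
      have hby := base_pos hlam hy.1
      have hBy := hasDerivAt_F (c := α2 + α3) hlam hy.1
      have hlin : HasDerivAt
          (fun z : ℝ => θ * Bx * (1 - Real.exp (-lam * z)) ^ (α2 + α3))
          (θ * Bx * fGE y (α2 + α3) lam) y := hBy.const_mul (θ * Bx)
      have hKm : θ * Bx * (1 - Real.exp (-lam * y)) ^ (α2 + α3) ∈ Set.Ioo (-r2) r2 :=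
        (hKmemIcc y hy.1.le).2
      have hE1d : HasDerivAt E1 (E2 (θ * Bx * (1 - Real.exp (-lam * y)) ^ (α2 + α3)))
          (θ * Bx * (1 - Real.exp (-lam * y)) ^ (α2 + α3)) := hD2 _ hKm
      have hcomp := hE1d.comp y hlin
      have hmul := hBy.mul hcomp
      simp only [Function.comp] at hmul
      simp only [hφdef, hwdef]
      exact hmul.congr_deriv (by ring)
    have hwnn : ∀ y ∈ Set.Ioo (0:ℝ) x, 0 ≤ w y := by
      intro y hy
      have hK0 : 0 ≤ θ * Bx * (1 - Real.exp (-lam * y)) ^ (α2 + α3) := (hKmemIcc y hy.1.le).1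
      simp only [hwdef]
      exact mul_nonneg (fGE_pos hlam hA hy.1).le
        (add_nonneg (mul_nonneg hK0 (hE2nn _ hK0)) (hE1nn _ hK0))
    have hφcont : ContinuousOn φ (Set.Icc 0 x) := by
      intro y hy
      apply ContinuousAt.continuousWithinAt
      have hBycont : ContinuousAt (fun z : ℝ => (1 - Real.exp (-lam * z)) ^ (α2 + α3)) y :=
        ((continuous_rpow_pos hA).comp (continuous_base lam)).continuousAt
      have hKcont : ContinuousAt
          (fun z : ℝ => θ * Bx * (1 - Real.exp (-lam * z)) ^ (α2 + α3)) y :=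
        hBycont.const_mul _
      have hKm : θ * Bx * (1 - Real.exp (-lam * y)) ^ (α2 + α3) ∈ Set.Ioo (-r2) r2 :=
        (hKmemIcc y hy.1).2
      have hE1at : ContinuousAt E1 (θ * Bx * (1 - Real.exp (-lam * y)) ^ (α2 + α3)) :=
        (hD2 _ hKm).continuousAt
      simp only [hφdef]
      exact hBycont.mul (ContinuousAt.comp (g := E1)
        (f := fun z : ℝ => θ * Bx * (1 - Real.exp (-lam * z)) ^ (α2 + α3)) hE1at hKcont)
    have hint : IntervalIntegrable w volume 0 x := by
      apply intervalIntegral.intervalIntegrable_deriv_of_nonneg (g := φ)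
      · rwa [Set.uIcc_of_le hx.le]
      · rw [min_eq_left hx.le, max_eq_right hx.le]; exact hφderiv
      · rw [min_eq_left hx.le, max_eq_right hx.le]; exact hwnn
    have hfw : ∀ y ∈ Set.Ioo (0:ℝ) x, f (x, y) = (θ / C θ * fGE x α1 lam) * w y := by
      intro y hy
      have hby := base_pos hlam hy.1
      have hK2eq : θ * K2 α1 α2 α3 lam x y
          = θ * Bx * (1 - Real.exp (-lam * y)) ^ (α2 + α3) := by
        rw [K2, hBxdef]; ring
      have hKm2 : θ * Bx * (1 - Real.exp (-lam * y)) ^ (α2 + α3) ∈ Set.Ioo (-r2) r2 :=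
        (hKmemIcc y hy.1.le).2
      have hKm3 : θ * Bx * (1 - Real.exp (-lam * y)) ^ (α2 + α3) ∈ Set.Ioo (-r3) r3 := by
        have h := hK2mem x y hx hy.1
        rw [hK2eq] at h
        exact hmem3 _ h.1 h.2
      simp only [hfdef]
      rw [hK2eq, hderivC _ hKm2, hderiv2C _ hKm3, hwdef]
      ring
    have hIOn : IntegrableOn w (Set.Ioo 0 x) volume :=
      ((intervalIntegrable_iff_integrableOn_Ioc_of_le hx.le).mp hint).mono_set
        Set.Ioo_subset_Ioc_self
    constructor
    · exact MeasureTheory.IntegrableOn.congr_fun (hIOn.const_mul (θ / C θ * fGE x α1 lam))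
        (fun y hy => (hfw y hy).symm) measurableSet_Ioo
    · have hφ0 : φ 0 = 0 := by
        simp [hφdef, Real.zero_rpow hA.ne']
      have hsub : ∫ y in Set.Ioo 0 x, w y = φ x - φ 0 := by
        rw [← MeasureTheory.integral_Ioc_eq_integral_Ioo,
          ← intervalIntegral.integral_of_le hx.le]
        exact intervalIntegral.integral_eq_sub_of_hasDerivAt_of_le hx.le hφcont hφderiv hint
      calc ∫ y in Set.Ioo 0 x, f (x, y)
          = ∫ y in Set.Ioo 0 x, (θ / C θ * fGE x α1 lam) * w y :=
            setIntegral_congr_fun measurableSet_Ioo hfw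
        _ = (θ / C θ * fGE x α1 lam) * ∫ y in Set.Ioo 0 x, w y :=
            MeasureTheory.integral_const_mul _ _
        _ = ψ x := by
            rw [hsub, hφ0, sub_zero]
            simp only [hψdef, hφdef, hBxdef]
            rw [show θ * (1 - Real.exp (-lam * x)) ^ α1 * (1 - Real.exp (-lam * x)) ^ (α2 + α3)
              = θ * ((1 - Real.exp (-lam * x)) ^ α1 * (1 - Real.exp (-lam * x)) ^ (α2 + α3))
              from mul_assoc _ _ _, ← Real.rpow_add hbx]
  have hΦderiv : ∀ x ∈ Set.Ioi (0:ℝ), HasDerivAt Φ (ψ x) x := by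
    intro x hx
    rw [Set.mem_Ioi] at hx
    have hbx := base_pos hlam hx
    have hB := hasDerivAt_F (c := α1 + (α2 + α3)) hlam hx
    have hlin := hB.const_mul θ
    have hKmem1 : θ * (1 - Real.exp (-lam * x)) ^ (α1 + (α2 + α3)) ∈ Set.Ioo (-r1) r1 := by
      have h0 : 0 < (1 - Real.exp (-lam * x)) ^ (α1 + (α2 + α3)) := Real.rpow_pos_of_pos hbx _
      have h1 : (1 - Real.exp (-lam * x)) ^ (α1 + (α2 + α3)) < 1 :=
        Real.rpow_lt_one hbx.le base_lt_one hT
      constructor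
      · nlinarith
      · nlinarith
    have hCat := hD1 _ hKmem1
    have hcomp := hCat.comp x hlin
    simp only [Function.comp_def] at hcomp
    have hfin := hcomp.const_mul (θ / C θ * (α1 / ((α1 + (α2 + α3)) * θ)))
    simp only [hΦdef, hψdef]
    refine HasDerivAt.congr_deriv hfin (Eq.symm ?_)
    have hkey : (1 - Real.exp (-lam * x)) ^ (α1 - 1) * (1 - Real.exp (-lam * x)) ^ (α2 + α3)
        = (1 - Real.exp (-lam * x)) ^ (α1 + (α2 + α3) - 1) := by
      rw [← Real.rpow_add hbx]
      congr 1
      ring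
    rw [fGE, fGE, ← hkey]
    field_simp
  have hval0 : θ * (1 - Real.exp (-lam * 0)) ^ (α1 + (α2 + α3)) = 0 := by
    simp [Real.zero_rpow hT.ne']
  have hinner0 : ContinuousAt (fun z : ℝ => θ * (1 - Real.exp (-lam * z)) ^ (α1 + (α2 + α3))) 0 :=
    (((continuous_rpow_pos hT).comp (continuous_base lam)).continuousAt).const_mul θ
  have hΦcont : ContinuousWithinAt Φ (Set.Ici 0) 0 := by
    apply ContinuousAt.continuousWithinAt
    have hCA : ContinuousAt C (θ * (1 - Real.exp (-lam * 0)) ^ (α1 + (α2 + α3))) := by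
      rw [hval0]; exact hCcont0
    have h := ContinuousAt.comp (g := C)
      (f := fun z : ℝ => θ * (1 - Real.exp (-lam * z)) ^ (α1 + (α2 + α3))) hCA hinner0
    have h2 := h.const_mul (θ / C θ * (α1 / ((α1 + (α2 + α3)) * θ)))
    simpa only [hΦdef, Function.comp] using h2
  have hψnn : ∀ x ∈ Set.Ioi (0:ℝ), 0 ≤ ψ x := by
    intro x hx
    rw [Set.mem_Ioi] at hx
    have hbx := base_pos hlam hx
    have hK0 : 0 ≤ θ * (1 - Real.exp (-lam * x)) ^ (α1 + (α2 + α3)) :=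
      mul_nonneg hθ.le (Real.rpow_nonneg hbx.le _)
    simp only [hψdef]
    exact mul_nonneg (mul_nonneg (div_nonneg hθ.le hCθ.le) (fGE_pos hlam hα1 hx).le)
      (mul_nonneg (Real.rpow_nonneg hbx.le _) (hE1nn _ hK0))
  have hΦtends : Tendsto Φ atTop
      (𝓝 (θ / C θ * (α1 / ((α1 + (α2 + α3)) * θ)) * C θ)) := by
    have h1 : Tendsto (fun y : ℝ => lam * y) atTop atTop :=
      Tendsto.const_mul_atTop hlam tendsto_id
    have h2 : Tendsto (fun y : ℝ => -lam * y) atTop atBot := by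
      have h := tendsto_neg_atTop_atBot.comp h1
      exact h.congr fun y => (neg_mul lam y).symm
    have h3 : Tendsto (fun y : ℝ => Real.exp (-lam * y)) atTop (𝓝 0) :=
      Real.tendsto_exp_atBot.comp h2
    have h4 : Tendsto (fun y : ℝ => 1 - Real.exp (-lam * y)) atTop (𝓝 1) := by
      simpa using h3.const_sub 1
    have h5 : Tendsto (fun y : ℝ => (1 - Real.exp (-lam * y)) ^ (α1 + (α2 + α3)))
        atTop (𝓝 1) := by
      have := h4.rpow_const (p := α1 + (α2 + α3)) (Or.inr hT.le)
      simpa using this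
    have h6 : Tendsto (fun y : ℝ => θ * (1 - Real.exp (-lam * y)) ^ (α1 + (α2 + α3)))
        atTop (𝓝 θ) := by
      have := h5.const_mul θ
      simpa using this
    have h7 := (hCcontθ.tendsto).comp h6
    have h8 := h7.const_mul (θ / C θ * (α1 / ((α1 + (α2 + α3)) * θ)))
    simpa only [hΦdef, Function.comp] using h8
  have houterInt : IntegrableOn ψ (Set.Ioi 0) volume :=
    integrableOn_Ioi_deriv_of_nonneg hΦcont hΦderiv hψnn hΦtends
  have hΦ0 : Φ 0 = 0 := by
    simp only [hΦdef]
    rw [hval0, hC0, mul_zero]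
  have houterVal : ∫ x in Set.Ioi 0, ψ x = α1 / (α1 + α2 + α3) := by
    rw [integral_Ioi_of_hasDerivAt_of_nonneg hΦcont hΦderiv hψnn hΦtends, hΦ0, sub_zero]
    field_simp
    ring
  -- Fubini assembly
  have hSopen : IsOpen S := by
    rw [hSdef]
    exact IsOpen.and (isOpen_lt continuous_const continuous_snd)
      (isOpen_lt continuous_snd continuous_fst)
  have hSmeas : MeasurableSet S := hSopen.measurableSet
  have hfnnS : ∀ p ∈ S, 0 ≤ f p := by
    intro p hp
    have hp' : 0 < p.2 ∧ p.2 < p.1 := hp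
    have hp2 : 0 < p.2 := hp'.1
    have hp1 : 0 < p.1 := hp'.1.trans hp'.2
    have hk := hK2mem p.1 p.2 hp1 hp2
    have hm3 : θ * K2 α1 α2 α3 lam p.1 p.2 ∈ Set.Ioo (-r3) r3 := hmem3 _ hk.1 hk.2
    have hm2 := hmem2of3 _ hm3
    simp only [hfdef]
    rw [hderivC _ hm2, hderiv2C _ hm3]
    exact mul_nonneg (mul_nonneg (mul_nonneg (div_nonneg hθ.le hCθ.le)
      (fGE_pos hlam hα1 hp1).le) (fGE_pos hlam hA hp2).le)
      (add_nonneg (mul_nonneg hk.1.le (hE2nn _ hk.1.le)) (hE1nn _ hk.1.le))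
  have hmKcont : Continuous (fun q : ℝ × ℝ => θ * K2 α1 α2 α3 lam q.1 q.2) := by
    simp only [K2]
    exact continuous_const.mul
      ((((continuous_rpow_pos hα1).comp ((continuous_base lam).comp continuous_fst))).mul
       (((continuous_rpow_pos hA).comp ((continuous_base lam).comp continuous_snd))))
  have hfcontS : ContinuousOn f S := by
    intro p hp
    have hp' : 0 < p.2 ∧ p.2 < p.1 := hp
    have hp2 : 0 < p.2 := hp'.1
    have hp1 : 0 < p.1 := hp'.1.trans hp'.2
    apply ContinuousAt.continuousWithinAt
    have hk := hK2mem p.1 p.2 hp1 hp2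
    have hpV : p ∈ (fun q : ℝ × ℝ => θ * K2 α1 α2 α3 lam q.1 q.2) ⁻¹' (Set.Ioo (-r3) r3) :=
      hmem3 _ hk.1 hk.2
    have hVopen : IsOpen
        ((fun q : ℝ × ℝ => θ * K2 α1 α2 α3 lam q.1 q.2) ⁻¹' (Set.Ioo (-r3) r3)) :=
      isOpen_Ioo.preimage hmKcont
    have hnhds := hVopen.mem_nhds hpV
    have hd1 : ContinuousAt (fun q : ℝ × ℝ => deriv C (θ * K2 α1 α2 α3 lam q.1 q.2)) p := by
      have hcontE : ContinuousAt (fun q : ℝ × ℝ => E1 (θ * K2 α1 α2 α3 lam q.1 q.2)) p :=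
        ContinuousAt.comp (g := E1)
          (f := fun q : ℝ × ℝ => θ * K2 α1 α2 α3 lam q.1 q.2)
          ((hD2 _ (hmem2of3 _ hpV)).continuousAt) hmKcont.continuousAt
      apply hcontE.congr
      filter_upwards [hnhds] with q hq
      exact (hderivC _ (hmem2of3 _ hq)).symm
    have hd2 : ContinuousAt
        (fun q : ℝ × ℝ => deriv (deriv C) (θ * K2 α1 α2 α3 lam q.1 q.2)) p := by
      have hcontE : ContinuousAt (fun q : ℝ × ℝ => E2 (θ * K2 α1 α2 α3 lam q.1 q.2)) p :=
        ContinuousAt.comp (g := E2)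
          (f := fun q : ℝ × ℝ => θ * K2 α1 α2 α3 lam q.1 q.2)
          (hE2cont _ hpV) hmKcont.continuousAt
      apply hcontE.congr
      filter_upwards [hnhds] with q hq
      exact (hderiv2C _ hq).symm
    have hg1 : ContinuousAt (fun q : ℝ × ℝ => fGE q.1 α1 lam) p :=
      ContinuousAt.comp (g := fun z => fGE z α1 lam) (f := fun q : ℝ × ℝ => q.1)
        (continuousAt_fGE hlam hp1) continuous_fst.continuousAt
    have hg2 : ContinuousAt (fun q : ℝ × ℝ => fGE q.2 (α2 + α3) lam) p :=
      ContinuousAt.comp (g := fun z => fGE z (α2 + α3) lam) (f := fun q : ℝ × ℝ => q.2)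
        (continuousAt_fGE hlam hp2) continuous_snd.continuousAt
    simp only [hfdef]
    exact ((continuousAt_const.mul hg1).mul hg2).mul
      ((hmKcont.continuousAt.mul hd2).add hd1)
  have hslice : ∀ x : ℝ, (fun y => S.indicator f (x, y))
      = (Set.Ioo 0 x).indicator (fun y => f (x, y)) := by
    intro x
    funext y
    by_cases h : (x, y) ∈ S
    · rw [Set.indicator_of_mem h, Set.indicator_of_mem]
      exact ⟨h.1, h.2⟩
    · rw [Set.indicator_of_notMem h, Set.indicator_of_notMem]
      intro hy
      exact h ⟨hy.1, hy.2⟩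
  have hsliceInt : ∀ x : ℝ, Integrable (fun y => S.indicator f (x, y)) volume := by
    intro x
    rw [hslice x]
    rcases le_or_gt x 0 with h | h
    · rw [Set.Ioo_eq_empty (not_lt.mpr h)]
      simp only [Set.indicator_empty]
      exact integrable_zero _ _ _
    · rw [integrable_indicator_iff measurableSet_Ioo]
      exact (hinner x h).1
  have hinteq : ∀ x : ℝ, (∫ y, S.indicator f (x, y)) = (Set.Ioi (0:ℝ)).indicator ψ x := by
    intro x
    rcases le_or_gt x 0 with h | h
    · rw [Set.indicator_of_notMem (by simpa using not_lt.mpr h)]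
      have h0 : (fun y => S.indicator f (x, y)) = fun _ => (0:ℝ) := by
        rw [hslice x, Set.Ioo_eq_empty (not_lt.mpr h)]
        simp
      rw [h0]
      simp
    · rw [Set.indicator_of_mem (Set.mem_Ioi.mpr h)]
      rw [hslice x]
      rw [MeasureTheory.integral_indicator measurableSet_Ioo]
      exact (hinner x h).2
  have hnormint : Integrable (fun x => ∫ y, ‖S.indicator f (x, y)‖) volume := by
    have heq : (fun x : ℝ => ∫ y, ‖S.indicator f (x, y)‖) = (Set.Ioi (0:ℝ)).indicator ψ := by
      funext x
      rw [← hinteq x]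
      refine integral_congr_ae (Filter.Eventually.of_forall fun y => ?_)
      show ‖S.indicator f (x, y)‖ = S.indicator f (x, y)
      rw [Real.norm_eq_abs, abs_of_nonneg (Set.indicator_nonneg (fun q hq => hfnnS q hq) (x, y))]
    rw [heq]
    exact (integrable_indicator_iff measurableSet_Ioi).mpr houterInt
  have hgsm : AEStronglyMeasurable (S.indicator f) (volume : Measure (ℝ × ℝ)) :=
    (aestronglyMeasurable_indicator_iff hSmeas).mpr (hfcontS.aestronglyMeasurable hSmeas)
  rw [← MeasureTheory.integral_indicator hSmeas]
  rw [MeasureTheory.Measure.volume_eq_prod] at hgsm ⊢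
  have hIntg : Integrable (S.indicator f) ((volume : Measure ℝ).prod volume) :=
    (MeasureTheory.integrable_prod_iff hgsm).mpr
      ⟨Filter.Eventually.of_forall hsliceInt, hnormint⟩
  rw [MeasureTheory.integral_prod _ hIntg]
  have hfin : (fun x : ℝ => ∫ y, S.indicator f (x, y)) = (Set.Ioi (0:ℝ)).indicator ψ :=
    funext hinteq
  rw [hfin, MeasureTheory.integral_indicator measurableSet_Ioi]
  exact houterVal
end

section
/- Let 0 < θ < 1 and α1, α2, α3, λ > 0, and set K = (1−e^{−λ y1})^{α1+α3}·(1−e^{−λ y2})^{α2}. For 0 < y1 < y2, the mixed second partial derivative ∂²/∂y1 ∂y2 of the function (y1, y2) ↦ log(1 − θ K) / log(1 − θ) equals −θ · f_GE(y1; α1+α3, λ) · f_GE(y2; α2, λ) / ( log(1−θ) · (1 − θ K)² ). (The absolutely continuous density f1 of the bivariate generalized exponential–logarithmic (BGEL) distribution, i.e. the case C(θ) = −log(1−θ).) -/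
open Real Filter

noncomputable def KK (α1 α3 α2 lam y1 y2 : ℝ) : ℝ :=
  (1 - Real.exp (-lam * y1)) ^ (α1 + α3) * (1 - Real.exp (-lam * y2)) ^ α2

lemma u_pos {lam t : ℝ} (hlam : 0 < lam) (ht : 0 < t) :
    0 < 1 - Real.exp (-lam * t) := by
  have : Real.exp (-lam * t) < 1 := by
    rw [Real.exp_lt_one_iff]; nlinarith
  linarith

lemma u_lt_one {lam t : ℝ} : 1 - Real.exp (-lam * t) < 1 := by
  have := Real.exp_pos (-lam * t); linarith

lemma A_pos {α lam t : ℝ} (hlam : 0 < lam) (ht : 0 < t) :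
    0 < (1 - Real.exp (-lam * t)) ^ α :=
  Real.rpow_pos_of_pos (u_pos hlam ht) α

lemma A_le_one {α lam t : ℝ} (hα : 0 < α) (hlam : 0 < lam) (ht : 0 < t) :
    (1 - Real.exp (-lam * t)) ^ α ≤ 1 :=
  Real.rpow_le_one (u_pos hlam ht).le u_lt_one.le hα.le

lemma hasDerivAt_A (α lam t : ℝ) (hlam : 0 < lam) (ht : 0 < t) :
    HasDerivAt (fun s => (1 - Real.exp (-lam * s)) ^ α) (fGE t α lam) t := by
  have h1 : HasDerivAt (fun s : ℝ => -lam * s) (-lam) t := by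
    simpa using (hasDerivAt_id t).const_mul (-lam)
  have h2 := (Real.hasDerivAt_exp (-lam * t)).comp t h1
  have h3 : HasDerivAt (fun s : ℝ => 1 - Real.exp (-lam * s))
      (lam * Real.exp (-lam * t)) t := by
    have := h2.const_sub 1
    exact this.congr_deriv (by ring)
  have hu : (1 - Real.exp (-lam * t)) ≠ 0 := (u_pos hlam ht).ne'
  have h4 := (Real.hasDerivAt_rpow_const (p := α) (Or.inl hu)).comp t h3
  refine h4.congr_deriv ?_
  unfold fGE; ring

/-- Density `f1` of the bivariate generalized exponential–logarithmic (BGEL) distribution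
(the BGEPS case `C(θ) = -log(1-θ)`): for `0 < y1 < y2`,
`∂²/∂y1∂y2 [log(1-θK)/log(1-θ)]
  = -θ f_GE(y1; α1+α3, λ) f_GE(y2; α2, λ) / (log(1-θ) (1-θK)²)`. -/
theorem stmt_15 (θ : ℝ) (hθ0 : 0 < θ) (hθ1 : θ < 1)
    (α1 α2 α3 lam : ℝ) (hα1 : 0 < α1) (hα2 : 0 < α2) (hα3 : 0 < α3) (hlam : 0 < lam)
    (y1 y2 : ℝ) (hy1 : 0 < y1) (h12 : y1 < y2) :
    deriv (fun t1 : ℝ =>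
        deriv (fun t2 : ℝ =>
            Real.log (1 - θ * KK α1 α3 α2 lam t1 t2) / Real.log (1 - θ)) y2) y1 =
      -θ * fGE y1 (α1 + α3) lam * fGE y2 α2 lam /
        (Real.log (1 - θ) * (1 - θ * KK α1 α3 α2 lam y1 y2) ^ 2) := by
  set L := Real.log (1 - θ) with hL
  have hy2 : 0 < y2 := hy1.trans h12
  have hLne : L ≠ 0 := by
    have : Real.log (1 - θ) < 0 := Real.log_neg (by linarith) (by linarith)
    exact this.ne
  set A : ℝ → ℝ := fun t => (1 - Real.exp (-lam * t)) ^ (α1 + α3) with hAdef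
  set B : ℝ → ℝ := fun t => (1 - Real.exp (-lam * t)) ^ α2 with hBdef
  have hα13 : 0 < α1 + α3 := by linarith
  -- positivity of 1 - θ A B for t1, t2 > 0
  have hden : ∀ t1 t2 : ℝ, 0 < t1 → 0 < t2 → 0 < 1 - θ * (A t1 * B t2) := by
    intro t1 t2 ht1 ht2
    have hA1 : A t1 ≤ 1 := A_le_one hα13 hlam ht1
    have hB1 : B t2 ≤ 1 := A_le_one hα2 hlam ht2
    have hA0 : 0 < A t1 := A_pos hlam ht1
    have hB0 : 0 < B t2 := A_pos hlam ht2
    have hAB : A t1 * B t2 ≤ 1 := mul_le_one₀ hA1 hB0.le hB1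
    nlinarith [mul_pos hA0 hB0]
  -- inner derivative formula
  have inner : ∀ t1 : ℝ, 0 < t1 →
      deriv (fun t2 : ℝ =>
          Real.log (1 - θ * KK α1 α3 α2 lam t1 t2) / L) y2 =
        -θ * A t1 * fGE y2 α2 lam / ((1 - θ * (A t1 * B y2)) * L) := by
    intro t1 ht1
    have hB' := hasDerivAt_A α2 lam y2 hlam hy2
    have hg : HasDerivAt (fun t2 => 1 - θ * (A t1 * B t2))
        (-(θ * (A t1 * fGE y2 α2 lam))) y2 := by
      have := ((hB'.const_mul (A t1)).const_mul θ).const_sub 1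
      convert this using 1
    have hgne : 1 - θ * (A t1 * B y2) ≠ 0 := (hden t1 y2 ht1 hy2).ne'
    have hlog := (hg.log hgne).div_const L
    have heq : (fun t2 : ℝ => Real.log (1 - θ * KK α1 α3 α2 lam t1 t2) / L) =
        fun t2 => Real.log (1 - θ * (A t1 * B t2)) / L := by
      funext t2; simp [KK, hAdef, hBdef]
    rw [heq, hlog.deriv]
    field_simp
  -- outer: eventual equality
  have hev : (fun t1 : ℝ =>
      deriv (fun t2 : ℝ =>
          Real.log (1 - θ * KK α1 α3 α2 lam t1 t2) / L) y2) =ᶠ[nhds y1]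
      (fun t1 => -θ * A t1 * fGE y2 α2 lam / ((1 - θ * (A t1 * B y2)) * L)) := by
    filter_upwards [eventually_gt_nhds hy1] with t1 ht1 using inner t1 ht1
  rw [hev.deriv_eq]
  -- derivative of the formula at y1
  have hA' := hasDerivAt_A (α1 + α3) lam y1 hlam hy1
  set fB := fGE y2 α2 lam with hfB
  have hN : HasDerivAt (fun t1 => -θ * A t1 * fB)
      (-θ * fGE y1 (α1 + α3) lam * fB) y1 := by
    have := (hA'.const_mul (-θ)).mul_const fB
    convert this using 1
  have hD : HasDerivAt (fun t1 => (1 - θ * (A t1 * B y2)) * L)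
      (-(θ * (fGE y1 (α1 + α3) lam * B y2)) * L) y1 := by
    have := (((hA'.mul_const (B y2)).const_mul θ).const_sub 1).mul_const L
    convert this using 1
  have hDne : (1 - θ * (A y1 * B y2)) * L ≠ 0 :=
    mul_ne_zero (hden y1 y2 hy1 hy2).ne' hLne
  have hdiv := hN.div hD hDne
  rw [show (fun t1 => -θ * A t1 * fB / ((1 - θ * (A t1 * B y2)) * L)) = ((fun t1 => -θ * A t1 * fB) / fun t1 => (1 - θ * (A t1 * B y2)) * L) from rfl, hdiv.deriv]
  have hK : KK α1 α3 α2 lam y1 y2 = A y1 * B y2 := by simp [KK, hAdef, hBdef]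
  rw [hK]
  have h0 : (1 - θ * (A y1 * B y2)) ≠ 0 := (hden y1 y2 hy1 hy2).ne'
  field_simp
  ring
end
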